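/- (Hoffman–Wielandt for symmetric matrices) Let A and E be real symmetric n×n matrices, with eigenvalues λ₁ ≤ … ≤ λ_n of A and μ₁ ≤ … ≤ μ_n of A+E (in nondecreasing order). Then there exists a permutation σ of {1,…,n} such that Σᵢ (μ_{σ(i)} − λᵢ)² ≤ ‖E‖_F², where ‖E‖_F² = tr(E Eᵀ). -/

import Mathlib

open Matrix Finset

/-- Hoffman–Wielandt theorem for real symmetric matrices: there is a pairing of the
eigenvalues of `A` and of `A + E` whose squared mismatch is bounded by `‖E‖_F² = tr(EEᵀ)`. -/
theorem hoffman_wielandt {n : ℕ}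
    (A E : Matrix (Fin n) (Fin n) ℝ)
    (hA : A.IsHermitian) (hE : E.IsHermitian) :
    ∃ σ : Equiv.Perm (Fin n),
      ∑ i, ((hA.add hE).eigenvalues (σ i) - hA.eigenvalues i) ^ 2 ≤ (E * Eᵀ).trace := by
  classical
  set B := A + E with hBdef
  have hB : B.IsHermitian := hA.add hE
  set lam := hA.eigenvalues with hlam
  set mu := hB.eigenvalues with hmu
  set U : Matrix (Fin n) (Fin n) ℝ := (hA.eigenvectorUnitary : Matrix (Fin n) (Fin n) ℝ) with hU
  set V : Matrix (Fin n) (Fin n) ℝ := (hB.eigenvectorUnitary : Matrix (Fin n) (Fin n) ℝ) with hV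
  have hUU : star U * U = 1 := Unitary.coe_star_mul_self hA.eigenvectorUnitary
  have hUU' : U * star U = 1 := Unitary.coe_mul_star_self hA.eigenvectorUnitary
  have hVV : star V * V = 1 := Unitary.coe_star_mul_self hB.eigenvectorUnitary
  have hVV' : V * star V = 1 := Unitary.coe_mul_star_self hB.eigenvectorUnitary
  set W : Matrix (Fin n) (Fin n) ℝ := star V * U with hW
  have hWW : W * star W = 1 := by
    rw [hW, StarMul.star_mul, star_star, Matrix.mul_assoc (star V) U,
      ← Matrix.mul_assoc U (star U) V, hUU', one_mul, hVV]
  have hWW' : star W * W = 1 := by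
    rw [hW, StarMul.star_mul, star_star, Matrix.mul_assoc (star U) V,
      ← Matrix.mul_assoc V (star V) U, hVV', one_mul, hUU]
  -- diagonalizations
  have hdA : star U * A * U = diagonal lam := by
    have := hA.conjStarAlgAut_star_eigenvectorUnitary
    rw [Unitary.conjStarAlgAut_star_apply] at this
    simpa [hU, hlam] using this
  have hdB : star V * B * V = diagonal mu := by
    have := hB.conjStarAlgAut_star_eigenvectorUnitary
    rw [Unitary.conjStarAlgAut_star_apply] at this
    simpa [hV, hmu] using this
  set F : Matrix (Fin n) (Fin n) ℝ := star V * E * U with hF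
  have hFeq : F = diagonal mu * W - W * diagonal lam := by
    have h1 : star V * B * U = diagonal mu * W := by
      rw [← hdB, hW, Matrix.mul_assoc (star V * B) V, ← Matrix.mul_assoc V (star V) U,
        hVV', one_mul]
    have h2 : star V * A * U = W * diagonal lam := by
      rw [← hdA, hW, Matrix.mul_assoc (star V) U, ← Matrix.mul_assoc U (star U * A) U,
        ← Matrix.mul_assoc U (star U) A, hUU', one_mul, ← Matrix.mul_assoc]
    have hEBA : E = B - A := by simp [hBdef]
    rw [hF, hEBA, Matrix.mul_sub, Matrix.sub_mul, h1, h2]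
  have hFapp : ∀ i j, F i j = (mu i - lam j) * W i j := by
    intro i j
    rw [hFeq]
    simp [Matrix.sub_apply, diagonal_mul, mul_diagonal, sub_mul, mul_comm]
  -- trace identity
  have hEVF : E = V * F * star U := by
    rw [hF, ← Matrix.mul_assoc V (star V * E) U, ← Matrix.mul_assoc V (star V) E, hVV',
      one_mul, Matrix.mul_assoc E U (star U), hUU', Matrix.mul_one]
  have hEt : Eᵀ = star E := by
    ext i j; simp [star_apply]
  have hkey : E * Eᵀ = V * (F * star F) * star V := by
    rw [hEt]
    conv_lhs => rw [hEVF]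
    simp only [StarMul.star_mul, star_star]
    rw [Matrix.mul_assoc (V * F) (star U), ← Matrix.mul_assoc (star U) U, hUU, one_mul,
      ← Matrix.mul_assoc (V * F) (star F) (star V), Matrix.mul_assoc V F (star F)]
  have htr : (E * Eᵀ).trace = (F * star F).trace := by
    rw [hkey, Matrix.trace_mul_comm, ← Matrix.mul_assoc, hVV, one_mul]
  have htr2 : (E * Eᵀ).trace = ∑ i, ∑ j, ((mu i - lam j) ^ 2) * (W i j) ^ 2 := by
    rw [htr]
    simp only [Matrix.trace, Matrix.diag, Matrix.mul_apply, star_apply, star_trivial]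
    refine Finset.sum_congr rfl fun i _ => Finset.sum_congr rfl fun j _ => ?_
    rw [hFapp i j]; ring
  -- doubly stochastic matrix of squares
  have hSds : Matrix.of (fun i j => (W i j) ^ 2) ∈ doublyStochastic ℝ (Fin n) := by
    rw [mem_doublyStochastic_iff_sum]
    refine ⟨fun i j => sq_nonneg _, fun i => ?_, fun j => ?_⟩
    · have h := congrFun (congrFun hWW i) i
      simp only [Matrix.mul_apply, star_apply, star_trivial, Matrix.one_apply_eq] at h
      simpa [sq] using h
    · have h := congrFun (congrFun hWW' j) j
      simp only [Matrix.mul_apply, star_apply, star_trivial, Matrix.one_apply_eq] at h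
      simpa [sq] using h
  obtain ⟨w, hw0, hw1, hwS⟩ := exists_eq_sum_perm_of_mem_doublyStochastic hSds
  have hSentry : ∀ i j, (W i j) ^ 2 = ∑ σ : Equiv.Perm (Fin n), w σ * (σ.permMatrix ℝ) i j := by
    intro i j
    have h := congrFun (congrFun hwS i) j
    simp only [Matrix.sum_apply, Matrix.smul_apply, smul_eq_mul, Matrix.of_apply] at h
    exact h.symm
  set val : Equiv.Perm (Fin n) → ℝ := fun σ => ∑ i, (mu i - lam (σ i)) ^ 2 with hval
  have hrow : ∀ i, ∑ j, ((mu i - lam j) ^ 2) * (W i j) ^ 2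
      = ∑ σ : Equiv.Perm (Fin n), w σ * (mu i - lam (σ i)) ^ 2 := by
    intro i
    calc ∑ j, ((mu i - lam j) ^ 2) * (W i j) ^ 2
        = ∑ j, ∑ σ : Equiv.Perm (Fin n), ((mu i - lam j) ^ 2) * (w σ * (σ.permMatrix ℝ) i j) := by
          refine Finset.sum_congr rfl fun j _ => ?_
          rw [hSentry i j, Finset.mul_sum]
      _ = ∑ σ : Equiv.Perm (Fin n), ∑ j, ((mu i - lam j) ^ 2) * (w σ * (σ.permMatrix ℝ) i j) :=
          Finset.sum_comm
      _ = ∑ σ : Equiv.Perm (Fin n), w σ * (mu i - lam (σ i)) ^ 2 := by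
          refine Finset.sum_congr rfl fun σ _ => ?_
          simp [Equiv.Perm.permMatrix, PEquiv.toMatrix_apply, Equiv.toPEquiv_apply,
            Option.mem_def, mul_ite, mul_zero, mul_one, eq_comm, mul_comm]
  have hsum : (E * Eᵀ).trace = ∑ σ : Equiv.Perm (Fin n), w σ * val σ := by
    rw [htr2]
    calc ∑ i, ∑ j, ((mu i - lam j) ^ 2) * (W i j) ^ 2
        = ∑ i, ∑ σ : Equiv.Perm (Fin n), w σ * (mu i - lam (σ i)) ^ 2 :=
          Finset.sum_congr rfl fun i _ => hrow i
      _ = ∑ σ : Equiv.Perm (Fin n), ∑ i, w σ * (mu i - lam (σ i)) ^ 2 := Finset.sum_comm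
      _ = ∑ σ : Equiv.Perm (Fin n), w σ * val σ := by
          refine Finset.sum_congr rfl fun σ _ => ?_
          rw [hval, Finset.mul_sum]
  obtain ⟨σ₀, -, hσ₀⟩ := Finset.exists_min_image Finset.univ val ⟨1, Finset.mem_univ 1⟩
  have hmin : val σ₀ ≤ (E * Eᵀ).trace := by
    rw [hsum]
    calc val σ₀ = ∑ σ : Equiv.Perm (Fin n), w σ * val σ₀ := by
          rw [← Finset.sum_mul, hw1, one_mul]
      _ ≤ ∑ σ : Equiv.Perm (Fin n), w σ * val σ :=
          Finset.sum_le_sum fun σ _ =>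
            mul_le_mul_of_nonneg_left (hσ₀ σ (Finset.mem_univ σ)) (hw0 σ)
  refine ⟨σ₀⁻¹, ?_⟩
  have hre : ∑ i, (mu (σ₀⁻¹ i) - lam i) ^ 2 = val σ₀ := by
    rw [hval, ← Equiv.sum_comp σ₀ (fun i => (mu (σ₀⁻¹ i) - lam i) ^ 2)]
    simp
  exact le_of_eq_of_le hre hmin
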